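/- arXiv:2106.01509 — 2 statements merged into one kernel-verified Lean document; each statement's English description precedes it below -/
import Mathlib

section
/- Let d be an odd positive integer and g ∈ ℂ^d a unit vector. Then rank(G(g)) is an odd number. -/
open Complex Finset

noncomputable section

/-- `gw d` is the primitive `d`-th root of unity `ω = exp(2πi/d)`. -/
def gw (d : ℕ) : ℂ := Complex.exp (2 * Real.pi * Complex.I / d)

/-- `modT d k l g = M^k T^ℓ g`, where `(Mg)_n = ω^n g_n` and `(Tg)_n = g_{n-1}`. -/
def modT (d : ℕ) (k l : ZMod d) (g : ZMod d → ℂ) : ZMod d → ℂ :=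
  fun n => gw d ^ (k.val * n.val) * g (n - l)

/-- `inn d x y = ⟨x,y⟩ = Σ_n x_n conj(y_n)`. -/
def inn (d : ℕ) [NeZero d] (x y : ZMod d → ℂ) : ℂ :=
  ∑ n : ZMod d, x n * (starRingEnd ℂ) (y n)

/-- The `d² × d²` Gram matrix `G(g)` with entries `|⟨M^k T^ℓ g, M^{k'} T^{ℓ'} g⟩|²`. -/
def Gmat (d : ℕ) [NeZero d] (g : ZMod d → ℂ) :
    Matrix (ZMod d × ZMod d) (ZMod d × ZMod d) ℂ :=
  fun p q =>
    ((‖inn d (modT d p.1 p.2 g) (modT d q.1 q.2 g)‖ ^ 2 : ℝ) : ℂ)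

lemma gw_pow (d : ℕ) [NeZero d] (m : ℕ) : gw d ^ m = ZMod.stdAddChar (m : ZMod d) := by
  have := ZMod.stdAddChar_coe (N := d) (m : ℤ)
  push_cast at this
  rw [this, gw, ← Complex.exp_nat_mul]
  congr 1; ring

lemma char_mul_val (d : ℕ) [NeZero d] (k n : ZMod d) :
    gw d ^ (k.val * n.val) = ZMod.stdAddChar (k * n) := by
  rw [gw_pow]; congr 1
  push_cast [ZMod.natCast_val, ZMod.cast_id]
  ring

lemma abs_char (d : ℕ) [NeZero d] (x : ZMod d) : ‖(ZMod.stdAddChar x : ℂ)‖ = 1 := by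
  rw [ZMod.stdAddChar_apply]; exact Circle.norm_coe (ZMod.toCircle x)

lemma char_ne_zero (d : ℕ) [NeZero d] (x : ZMod d) : ZMod.stdAddChar x ≠ (0 : ℂ) := by
  intro h
  have := abs_char d x
  rw [h] at this; simp at this

lemma conj_char (d : ℕ) [NeZero d] (x : ZMod d) :
    (starRingEnd ℂ) (ZMod.stdAddChar x) = ZMod.stdAddChar (-x) := by
  apply mul_left_cancel₀ (char_ne_zero d x)
  rw [Complex.mul_conj, ← AddChar.map_add_eq_mul, add_neg_cancel, AddChar.map_zero_eq_one,
    ← Complex.sq_norm, abs_char]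
  norm_num

lemma sum_char (d : ℕ) [NeZero d] (a : ZMod d) :
    ∑ x : ZMod d, ZMod.stdAddChar (a * x) = if a = 0 then (d : ℂ) else 0 := by
  split_ifs with h
  · simp [h, AddChar.map_zero_eq_one, ZMod.card]
  · have hfun : (fun x : ZMod d => ZMod.stdAddChar (a * x))
        = ⇑(AddChar.mulShift ZMod.stdAddChar a) := by
      ext x; rw [AddChar.mulShift_apply]
    calc ∑ x : ZMod d, ZMod.stdAddChar (a * x)
        = ∑ x : ZMod d, (AddChar.mulShift ZMod.stdAddChar a) x := by rw [hfun]
      _ = 0 := by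
          apply AddChar.sum_eq_zero_iff_ne_zero.mpr
          intro h0
          apply h
          have h1 : (AddChar.mulShift ZMod.stdAddChar a) 1 = 1 := by
            rw [h0]; rfl
          rw [AddChar.mulShift_apply, mul_one] at h1
          have : ZMod.stdAddChar a = ZMod.stdAddChar (0 : ZMod d) := by
            rw [h1, AddChar.map_zero_eq_one]
          exact ZMod.injective_stdAddChar this

lemma sum_char2 (d : ℕ) [NeZero d] (a : ZMod d × ZMod d) :
    ∑ w : ZMod d × ZMod d, ZMod.stdAddChar (a.1 * w.1 + a.2 * w.2)
      = if a = 0 then ((d : ℂ) ^ 2) else 0 := by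
  rw [Fintype.sum_prod_type]
  have h : ∀ w1 : ZMod d, ∑ w2 : ZMod d, ZMod.stdAddChar (a.1 * w1 + a.2 * w2)
      = ZMod.stdAddChar (a.1 * w1) * ∑ w2 : ZMod d, ZMod.stdAddChar (a.2 * w2) := by
    intro w1
    rw [Finset.mul_sum]
    exact Finset.sum_congr rfl fun w2 _ => by rw [AddChar.map_add_eq_mul]
  simp_rw [h]
  rw [← Finset.sum_mul, sum_char, sum_char]
  by_cases h1 : a.1 = 0 <;> by_cases h2 : a.2 = 0 <;>
    simp [h1, h2, Prod.ext_iff, sq]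

lemma inn_modT (d : ℕ) [NeZero d] (g : ZMod d → ℂ) (k l k' l' : ZMod d) :
    inn d (modT d k l g) (modT d k' l' g)
      = ZMod.stdAddChar ((k - k') * l) * inn d g (modT d (k' - k) (l' - l) g) := by
  have merge : ∀ (x y : ZMod d) (u v : ℂ),
      ZMod.stdAddChar x * (u * (ZMod.stdAddChar y * v))
        = ZMod.stdAddChar (x + y) * (u * v) := by
    intro x y u v; rw [AddChar.map_add_eq_mul]; ring
  have merge2 : ∀ (x y : ZMod d) (u v : ℂ),
      ZMod.stdAddChar x * u * (ZMod.stdAddChar y * v)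
        = ZMod.stdAddChar (x + y) * (u * v) := by
    intro x y u v; rw [AddChar.map_add_eq_mul]; ring
  unfold inn modT
  rw [Finset.mul_sum]
  symm
  apply Fintype.sum_equiv (Equiv.addRight l)
  intro m
  simp only [Equiv.coe_addRight, char_mul_val, map_mul, conj_char, add_sub_cancel_right]
  have harg : m + l - l' = m - (l' - l) := by ring
  rw [harg, merge, merge2]
  congr 1
  ring

/-- `c(v) = |⟨g, π(v)g⟩|²` as a complex number. -/
def cfun (d : ℕ) [NeZero d] (g : ZMod d → ℂ) (v : ZMod d × ZMod d) : ℂ :=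
  ((‖inn d g (modT d v.1 v.2 g)‖ ^ 2 : ℝ) : ℂ)

lemma Gmat_eq (d : ℕ) [NeZero d] (g : ZMod d → ℂ) (p q : ZMod d × ZMod d) :
    Gmat d g p q = cfun d g (q - p) := by
  unfold Gmat cfun
  rw [inn_modT, norm_mul, abs_char, one_mul]
  rfl

def Ffun (d : ℕ) [NeZero d] : Matrix (ZMod d × ZMod d) (ZMod d × ZMod d) ℂ :=
  fun v w => ZMod.stdAddChar (v.1 * w.1 + v.2 * w.2)

def Finv (d : ℕ) [NeZero d] : Matrix (ZMod d × ZMod d) (ZMod d × ZMod d) ℂ :=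
  fun v w => ZMod.stdAddChar (-(v.1 * w.1 + v.2 * w.2))

def chat (d : ℕ) [NeZero d] (g : ZMod d → ℂ) (w : ZMod d × ZMod d) : ℂ :=
  ∑ v : ZMod d × ZMod d, cfun d g v * ZMod.stdAddChar (v.1 * w.1 + v.2 * w.2)

lemma FFinv (d : ℕ) [NeZero d] : Ffun d * Finv d = ((d : ℂ) ^ 2) • 1 := by
  ext v v'
  rw [Matrix.mul_apply]
  have h : ∀ w : ZMod d × ZMod d, Ffun d v w * Finv d w v'
      = ZMod.stdAddChar ((v.1 - v'.1) * w.1 + (v.2 - v'.2) * w.2) := by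
    intro w
    unfold Ffun Finv
    rw [← AddChar.map_add_eq_mul]
    congr 1
    ring
  simp_rw [h]
  have h2 := sum_char2 d (v - v')
  simp only [Prod.fst_sub, Prod.snd_sub] at h2
  rw [h2]
  by_cases hv : v = v' <;>
    simp [hv, Matrix.one_apply, sub_eq_zero, Matrix.smul_apply]

lemma FinvF (d : ℕ) [NeZero d] : Finv d * Ffun d = ((d : ℂ) ^ 2) • 1 := by
  ext v v'
  rw [Matrix.mul_apply]
  have h : ∀ w : ZMod d × ZMod d, Finv d v w * Ffun d w v'
      = ZMod.stdAddChar ((v'.1 - v.1) * w.1 + (v'.2 - v.2) * w.2) := by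
    intro w
    unfold Ffun Finv
    rw [← AddChar.map_add_eq_mul]
    congr 1
    ring
  simp_rw [h]
  have h2 := sum_char2 d (v' - v)
  simp only [Prod.fst_sub, Prod.snd_sub] at h2
  rw [h2]
  by_cases hv : v = v' <;>
    simp [hv, Matrix.one_apply, sub_eq_zero, Matrix.smul_apply, eq_comm]

lemma GF_eq (d : ℕ) [NeZero d] (g : ZMod d → ℂ) :
    Gmat d g * Ffun d = Ffun d * Matrix.diagonal (chat d g) := by
  ext p w
  rw [Matrix.mul_apply, Matrix.mul_diagonal]
  have h : ∀ q : ZMod d × ZMod d, Gmat d g p q * Ffun d q w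
      = cfun d g (q - p) * ZMod.stdAddChar (q.1 * w.1 + q.2 * w.2) := by
    intro q; rw [Gmat_eq]; rfl
  simp_rw [h]
  unfold Ffun chat
  rw [Finset.mul_sum]
  symm
  apply Fintype.sum_equiv (Equiv.addLeft p)
  intro v
  simp only [Equiv.coe_addLeft, add_sub_cancel_left]
  rw [mul_comm (ZMod.stdAddChar (p.1 * w.1 + p.2 * w.2)), mul_assoc, ← AddChar.map_add_eq_mul]
  congr 2
  simp only [Prod.fst_add, Prod.snd_add]
  ring

lemma even_card_invol {α : Type*} [DecidableEq α] (σ : α → α) (hσ : ∀ x, σ (σ x) = x) :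
    ∀ T : Finset α, (∀ x ∈ T, σ x ∈ T) → (∀ x ∈ T, σ x ≠ x) → Even T.card := by
  intro T
  induction T using Finset.strongInduction with
  | _ T ih =>
    intro hcl hnf
    rcases T.eq_empty_or_nonempty with rfl | ⟨a, ha⟩
    · simp
    · have hsa := hcl a ha
      have hne := hnf a ha
      have hpair : {a, σ a} ⊆ T := by
        intro x hx
        rcases Finset.mem_insert.mp hx with rfl | hx
        · exact ha
        · rw [Finset.mem_singleton.mp hx]; exact hsa
      have hss : T \ {a, σ a} ⊂ T := Finset.sdiff_ssubset hpair ⟨a, by simp⟩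
      have hcl' : ∀ x ∈ T \ {a, σ a}, σ x ∈ T \ {a, σ a} := by
        intro x hx
        rw [Finset.mem_sdiff] at hx ⊢
        obtain ⟨hxT, hxn⟩ := hx
        refine ⟨hcl x hxT, ?_⟩
        simp only [Finset.mem_insert, Finset.mem_singleton] at hxn ⊢
        push_neg at hxn ⊢
        refine ⟨fun h => hxn.2 ?_, fun h => hxn.1 ?_⟩
        · rw [← h, hσ]
        · have := congrArg σ h
          rwa [hσ, hσ] at this
      have hnf' : ∀ x ∈ T \ {a, σ a}, σ x ≠ x := fun x hx => hnf x (Finset.mem_sdiff.mp hx).1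
      have hev := ih _ hss hcl' hnf'
      have hle : ({a, σ a} : Finset α).card ≤ T.card := Finset.card_le_card hpair
      have hcard2 : ({a, σ a} : Finset α).card = 2 := Finset.card_pair (Ne.symm hne)
      have hcard : T.card = (T \ {a, σ a}).card + 2 := by
        rw [Finset.card_sdiff_of_subset hpair, hcard2]
        omega
      rw [hcard]
      obtain ⟨m, hm⟩ := hev
      exact ⟨m + 1, by omega⟩

lemma zmod_neg_self (d : ℕ) [NeZero d] (hodd : Odd d) (x : ZMod d) (h : -x = x) : x = 0 := by
  have hx : x + x = 0 := by rw [show x + x = -x + x from by rw [h]]; exact neg_add_cancel x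
  have h2x : (2 : ZMod d) * x = 0 := by rw [two_mul]; exact hx
  have h2u : IsUnit (2 : ZMod d) := by
    have : IsUnit ((2 : ℕ) : ZMod d) := by
      rw [ZMod.isUnit_iff_coprime]
      exact Nat.coprime_two_left.mpr hodd
    simpa using this
  exact (IsUnit.mul_right_eq_zero h2u).mp h2x

lemma prod_neg_self (d : ℕ) [NeZero d] (hodd : Odd d) (w : ZMod d × ZMod d) (h : -w = w) :
    w = 0 := by
  have h1 : -w.1 = w.1 := congrArg Prod.fst h
  have h2 : -w.2 = w.2 := congrArg Prod.snd h
  exact Prod.ext (zmod_neg_self d hodd w.1 h1) (zmod_neg_self d hodd w.2 h2)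

lemma isUnit_detF (d : ℕ) [NeZero d] : IsUnit (Ffun d).det := by
  have hd : ((d : ℂ) ^ 2) ≠ 0 :=
    pow_ne_zero 2 (Nat.cast_ne_zero.mpr (NeZero.ne d))
  have : Invertible (Ffun d) := by
    apply invertibleOfRightInverse (b := ((d : ℂ) ^ 2)⁻¹ • Finv d)
    rw [Matrix.mul_smul, FFinv, smul_smul, inv_mul_cancel₀ hd, one_smul]
  exact (Matrix.isUnit_iff_isUnit_det _).mp (isUnit_of_invertible _)

lemma rank_eq (d : ℕ) [NeZero d] (g : ZMod d → ℂ) :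
    (Gmat d g).rank = Fintype.card {w : ZMod d × ZMod d // chat d g w ≠ 0} := by
  classical
  have hF := isUnit_detF d
  calc (Gmat d g).rank
      = (Gmat d g * Ffun d).rank :=
        (Matrix.rank_mul_eq_left_of_isUnit_det (Ffun d) (Gmat d g) hF).symm
    _ = (Ffun d * Matrix.diagonal (chat d g)).rank := by rw [GF_eq]
    _ = (Matrix.diagonal (chat d g)).rank :=
        Matrix.rank_mul_eq_right_of_isUnit_det (Ffun d) _ hF
    _ = _ := Matrix.rank_diagonal _

lemma cfun_zero (d : ℕ) [NeZero d] (g : ZMod d → ℂ)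
    (hg : ∑ n : ZMod d, ‖g n‖ ^ 2 = 1) : cfun d g 0 = 1 := by
  have hmod : modT d 0 0 g = g := by
    funext n
    simp [modT, ZMod.val_zero]
  have hinn : inn d g g = 1 := by
    unfold inn
    have : ∀ n : ZMod d, g n * (starRingEnd ℂ) (g n)
        = ((‖g n‖ ^ 2 : ℝ) : ℂ) := by
      intro n
      rw [Complex.mul_conj, Complex.sq_norm]
    simp_rw [this]
    rw [← Complex.ofReal_sum, hg, Complex.ofReal_one]
  unfold cfun
  show ((‖inn d g (modT d 0 0 g)‖ ^ 2 : ℝ) : ℂ) = 1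
  rw [hmod, hinn]
  simp

lemma chat_zero_ne (d : ℕ) [NeZero d] (g : ZMod d → ℂ)
    (hg : ∑ n : ZMod d, ‖g n‖ ^ 2 = 1) : chat d g 0 ≠ 0 := by
  have h : chat d g 0 = ∑ v : ZMod d × ZMod d, cfun d g v := by
    unfold chat
    apply Finset.sum_congr rfl
    intro v _
    simp [AddChar.map_zero_eq_one]
  rw [h]
  have h2 : ∑ v : ZMod d × ZMod d, cfun d g v
      = ((∑ v : ZMod d × ZMod d, ‖inn d g (modT d v.1 v.2 g)‖ ^ 2 : ℝ) : ℂ) := by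
    rw [Complex.ofReal_sum]; rfl
  rw [h2, Complex.ofReal_ne_zero]
  have hge : (1 : ℝ) ≤ ∑ v : ZMod d × ZMod d, ‖inn d g (modT d v.1 v.2 g)‖ ^ 2 := by
    have h0 : ‖inn d g (modT d (0 : ZMod d × ZMod d).1 (0 : ZMod d × ZMod d).2 g)‖ ^ 2
        = 1 := by
      have := cfun_zero d g hg
      unfold cfun at this
      exact_mod_cast this
    have hs := Finset.single_le_sum
      (f := fun v : ZMod d × ZMod d => ‖inn d g (modT d v.1 v.2 g)‖ ^ 2)
      (fun v _ => sq_nonneg _) (Finset.mem_univ (0 : ZMod d × ZMod d))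
    rw [h0] at hs
    exact hs
  intro h0
  rw [h0] at hge
  linarith

lemma chat_neg (d : ℕ) [NeZero d] (g : ZMod d → ℂ) (w : ZMod d × ZMod d) :
    chat d g (-w) = (starRingEnd ℂ) (chat d g w) := by
  unfold chat
  rw [map_sum]
  apply Finset.sum_congr rfl
  intro v _
  rw [map_mul, conj_char]
  unfold cfun
  rw [Complex.conj_ofReal]
  congr 1
  simp only [Prod.fst_neg, Prod.snd_neg]
  ring

/-- if `d` is odd then `rank G(g)` is odd. -/
theorem stmt6 (d : ℕ) [NeZero d] (hd : 1 ≤ d) (hodd : Odd d) (g : ZMod d → ℂ)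
    (hg : ∑ n : ZMod d, ‖g n‖ ^ 2 = 1) :
    Odd (Gmat d g).rank := by
  classical
  rw [rank_eq d g, Fintype.card_subtype]
  set S : Finset (ZMod d × ZMod d) := Finset.filter (fun w => chat d g w ≠ 0) Finset.univ
    with hS
  have h0S : (0 : ZMod d × ZMod d) ∈ S :=
    Finset.mem_filter.mpr ⟨Finset.mem_univ _, chat_zero_ne d g hg⟩
  have hmemS : ∀ w, w ∈ S ↔ chat d g w ≠ 0 := by
    intro w; rw [hS, Finset.mem_filter]; simp
  have hcl : ∀ x ∈ S.erase 0, -x ∈ S.erase 0 := by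
    intro x hx
    rw [Finset.mem_erase] at hx ⊢
    obtain ⟨hx0, hxS⟩ := hx
    refine ⟨fun h => hx0 (neg_eq_zero.mp h), ?_⟩
    rw [hmemS] at hxS ⊢
    rw [chat_neg, starRingEnd_apply, ne_eq, star_eq_zero]
    exact hxS
  have hnf : ∀ x ∈ S.erase 0, -x ≠ x := by
    intro x hx h
    exact (Finset.mem_erase.mp hx).1 (prod_neg_self d hodd x h)
  have hev : Even (S.erase 0).card :=
    even_card_invol Neg.neg neg_neg (S.erase 0) hcl hnf
  have hc : S.card = (S.erase 0).card + 1 := (Finset.card_erase_add_one h0S).symm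
  rw [hc]
  exact hev.add_one
end
end

section
/- Let d ≥ 1 and let r be a positive divisor of d. Define the unit vector g ∈ ℂ^d by g_n = √(r/d) if r divides n (as an element of ℤ/dℤ represented in {0,…,d−1}) and g_n = 0 otherwise. Then rank(G(g)) = d, and the Gabor system {M^k T^ℓ g} is a 2-distance set: the set of values {|⟨M^k T^ℓ g, M^{k'} T^{ℓ'} g⟩| : (k,ℓ), (k',ℓ') ∈ (ℤ/dℤ)², (k,ℓ) ≠ (k',ℓ')} has at most 2 elements. -/
open Complex Finset

noncomputable section

lemma gw_ne (d : ℕ) : gw d ≠ 0 := Complex.exp_ne_zero _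

lemma gw_prim (d : ℕ) [NeZero d] : IsPrimitiveRoot (gw d) d :=
  Complex.isPrimitiveRoot_exp d (NeZero.ne d)

lemma gw_conj (d : ℕ) : (starRingEnd ℂ) (gw d) = (gw d)⁻¹ := by
  rw [gw, ← Complex.exp_conj, ← Complex.exp_neg]
  congr 1
  simp [map_div₀, Complex.conj_I, Complex.conj_ofNat]
  ring

lemma gw_abs (d : ℕ) : ‖gw d‖ = 1 := by
  have : gw d = Complex.exp ((2 * Real.pi / d : ℝ) * Complex.I) := by
    rw [gw]; push_cast; ring_nf
  rw [this, Complex.norm_exp_ofReal_mul_I]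

lemma gw_zpow_congr (d : ℕ) [NeZero d] {x y : ℤ} (h : (d : ℤ) ∣ x - y) :
    gw d ^ x = gw d ^ y := by
  obtain ⟨c, hc⟩ := h
  have h1 : gw d ^ (d : ℤ) = 1 := by
    rw [zpow_natCast]; exact (gw_prim d).pow_eq_one
  have hx : x = y + d * c := by omega
  rw [hx, zpow_add₀ (gw_ne d), _root_.zpow_mul, h1, _root_.one_zpow, mul_one]

lemma cast_val_add (d r : ℕ) [NeZero d] [NeZero r] (hrd : r ∣ d) (a b : ZMod d) :
    (((a + b).val : ZMod r)) = (a.val : ZMod r) + (b.val : ZMod r) := by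
  have hd0 : ((d : ZMod r)) = 0 := (ZMod.natCast_eq_zero_iff d r).mpr hrd
  rw [ZMod.val_add]
  conv_rhs => rw [← Nat.cast_add, ← Nat.div_add_mod (a.val + b.val) d]
  push_cast
  rw [hd0]
  ring

lemma cast_val_sub (d r : ℕ) [NeZero d] [NeZero r] (hrd : r ∣ d) (a b : ZMod d) :
    (((a - b).val : ZMod r)) = (a.val : ZMod r) - (b.val : ZMod r) := by
  have := cast_val_add d r hrd (a - b) b
  rw [sub_add_cancel] at this
  rw [this]; ring

lemma dvd_val_iff (d r : ℕ) [NeZero d] [NeZero r] (a : ZMod d) :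
    r ∣ a.val ↔ ((a.val : ZMod r)) = 0 :=
  (ZMod.natCast_eq_zero_iff _ _).symm

lemma key (d : ℕ) [NeZero d] (r : ℕ) (hr : 0 < r) (hrd : r ∣ d)
    (g : ZMod d → ℂ)
    (hgdef : ∀ n : ZMod d,
      g n = if r ∣ n.val then ((Real.sqrt ((r : ℝ) / d) : ℝ) : ℂ) else 0)
    (k l k' l' : ZMod d) :
    ‖inn d (modT d k l g) (modT d k' l' g)‖ =
      if ((k.val : ZMod (d / r)) = (k'.val : ZMod (d / r)) ∧
          (l.val : ZMod r) = (l'.val : ZMod r)) then 1 else 0 := by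
  haveI : NeZero r := ⟨hr.ne'⟩
  set s := d / r with hsdef
  have hrs : r * s = d := Nat.mul_div_cancel' hrd
  have hs0 : s ≠ 0 := by
    intro h
    rw [h, mul_zero] at hrs
    exact (NeZero.ne d) hrs.symm
  haveI : NeZero s := ⟨hs0⟩
  set m : ℤ := (k.val : ℤ) - (k'.val : ℤ) with hmdef
  set C : ℂ := (((r : ℝ) / d : ℝ) : ℂ) with hCdef
  have hgconj : ∀ a, (starRingEnd ℂ) (g a) = g a := by
    intro a; rw [hgdef]; split_ifs <;> simp
  have hterm : ∀ n : ZMod d, modT d k l g n * (starRingEnd ℂ) (modT d k' l' g n)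
      = gw d ^ (m * n.val) * (g (n - l) * g (n - l')) := by
    intro n
    simp only [modT, map_mul, map_pow, gw_conj, hgconj]
    rw [show gw d ^ (k.val * n.val) = gw d ^ ((k.val * n.val : ℕ) : ℤ) from
          (zpow_natCast _ _).symm,
        show ((gw d)⁻¹) ^ (k'.val * n.val) = gw d ^ (-((k'.val * n.val : ℕ) : ℤ)) from by
          rw [zpow_neg, zpow_natCast, inv_pow]]
    rw [mul_mul_mul_comm, ← zpow_add₀ (gw_ne d)]
    congr 2
    push_cast [hmdef]; ring
  have hcond : (gw d ^ (m * (r : ℤ)) = 1) ↔ ((k.val : ZMod s) = (k'.val : ZMod s)) := by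
    rw [(gw_prim d).zpow_eq_one_iff_dvd]
    have hd : (d : ℤ) = r * s := by exact_mod_cast hrs.symm
    rw [hd, show m * (r : ℤ) = (r : ℤ) * m from mul_comm _ _,
      mul_dvd_mul_iff_left (show (r : ℤ) ≠ 0 from by exact_mod_cast hr.ne'),
      ← ZMod.intCast_zmod_eq_zero_iff_dvd m s, hmdef]
    push_cast
    rw [sub_eq_zero]
  by_cases hcl : (l.val : ZMod r) = (l'.val : ZMod r)
  · -- translation-compatible case
    have hcase : ∀ n : ZMod d, g (n - l) * g (n - l') =
        if ((n - l).val : ZMod r) = 0 then C else 0 := by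
      intro n
      rw [hgdef (n - l), hgdef (n - l')]
      simp only [dvd_val_iff d r]
      have e1 : (((n - l).val : ZMod r)) = (n.val : ZMod r) - (l.val : ZMod r) :=
        cast_val_sub d r hrd n l
      have e2 : (((n - l').val : ZMod r)) = (n.val : ZMod r) - (l'.val : ZMod r) :=
        cast_val_sub d r hrd n l'
      have hiff : (((n - l').val : ZMod r) = 0) ↔ (((n - l).val : ZMod r) = 0) := by
        rw [e1, e2, ← hcl]
      by_cases h1 : (((n - l).val : ZMod r)) = 0
      · rw [if_pos h1, if_pos (hiff.mpr h1), if_pos h1, hCdef,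
          ← Complex.ofReal_mul, Real.mul_self_sqrt (by positivity)]
      · rw [if_neg h1, if_neg h1, zero_mul]
    have hζs : (gw d ^ (m * (r : ℤ))) ^ s = 1 := by
      rw [← zpow_natCast (gw d ^ (m * (r : ℤ))) s, ← _root_.zpow_mul]
      have h2 : m * (r : ℤ) * s = m * d := by
        have h3 : ((r : ℤ)) * s = d := by exact_mod_cast hrs
        rw [mul_assoc, h3]
      rw [h2]
      calc gw d ^ (m * (d : ℤ)) = gw d ^ (0 : ℤ) := gw_zpow_congr d (by simp)
        _ = 1 := zpow_zero (gw d)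
    have step1 : (∑ n : ZMod d, gw d ^ (m * n.val) *
          if ((n - l).val : ZMod r) = 0 then C else 0)
        = ∑ h : ZMod d, gw d ^ (m * l.val) *
          (gw d ^ (m * h.val) * if ((h.val : ZMod r)) = 0 then C else 0) := by
      refine (Fintype.sum_equiv (Equiv.addRight l) _ _ fun h => ?_).symm
      simp only [Equiv.coe_addRight, add_sub_cancel_right]
      have h2 : (d : ℤ) ∣ ((h + l).val : ℤ) - ((h.val : ℤ) + (l.val : ℤ)) := by
        obtain ⟨q, hq⟩ : ∃ q, h.val + l.val = d * q + (h.val + l.val) % d :=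
          ⟨_, (Nat.div_add_mod _ d).symm⟩
        have hq' : ((h.val : ℤ) + (l.val : ℤ))
            = (d : ℤ) * (q : ℤ) + (((h.val + l.val) % d : ℕ) : ℤ) := by
          exact_mod_cast hq
        refine ⟨-q, ?_⟩
        rw [ZMod.val_add]
        push_cast
        linarith [hq']
      have h3 : gw d ^ (m * ((h + l).val : ℤ)) = gw d ^ (m * (l.val : ℤ) + m * (h.val : ℤ)) := by
        refine gw_zpow_congr d ?_
        have h4 : m * ((h + l).val : ℤ) - (m * (l.val : ℤ) + m * (h.val : ℤ))
            = m * (((h + l).val : ℤ) - ((h.val : ℤ) + (l.val : ℤ))) := by ring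
        rw [h4]
        exact h2.mul_left m
      rw [h3, zpow_add₀ (gw_ne d), mul_assoc]
    have step2 : (∑ h : ZMod d, gw d ^ (m * h.val) *
          if ((h.val : ZMod r)) = 0 then C else 0)
        = (∑ a ∈ Finset.range s, (gw d ^ (m * (r : ℤ))) ^ a) * C := by
      rw [show (∑ h : ZMod d, gw d ^ (m * h.val) * if ((h.val : ZMod r)) = 0 then C else 0)
          = ∑ h : ZMod d, (if ((h.val : ZMod r)) = 0 then gw d ^ (m * h.val) else 0) * C from
        Finset.sum_congr rfl fun h _ => by split_ifs <;> ring]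
      rw [← Finset.sum_mul]
      congr 1
      rw [← Finset.sum_filter]
      refine Finset.sum_nbij' (fun h : ZMod d => h.val / r)
        (fun a : ℕ => ((r * a : ℕ) : ZMod d)) ?_ ?_ ?_ ?_ ?_
      · intro h hh
        simp only [Finset.mem_filter, Finset.mem_univ, true_and] at hh
        simp only [Finset.mem_range]
        have h6 : h.val < d := ZMod.val_lt h
        exact (Nat.div_lt_iff_lt_mul hr).mpr
          (lt_of_lt_of_eq h6 (by rw [mul_comm]; exact hrs.symm))
      · intro a ha
        simp only [Finset.mem_range] at ha
        simp only [Finset.mem_filter, Finset.mem_univ, true_and]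
        have h7 : r * (a + 1) ≤ d := by
          rw [← hrs]; exact Nat.mul_le_mul_left r ha
        have h8 : r * (a + 1) = r * a + r := by ring
        rw [ZMod.val_cast_of_lt (show r * a < d by omega)]
        push_cast
        rw [ZMod.natCast_self, zero_mul]
      · intro h hh
        simp only [Finset.mem_filter, Finset.mem_univ, true_and] at hh
        have hdvd : r ∣ h.val := (dvd_val_iff d r h).mpr hh
        show (((r * (h.val / r) : ℕ)) : ZMod d) = h
        rw [Nat.mul_div_cancel' hdvd]
        exact ZMod.natCast_rightInverse h
      · intro a ha
        simp only [Finset.mem_range] at ha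
        show (((r * a : ℕ) : ZMod d)).val / r = a
        have h7 : r * (a + 1) ≤ d := by
          rw [← hrs]; exact Nat.mul_le_mul_left r ha
        have h8 : r * (a + 1) = r * a + r := by ring
        rw [ZMod.val_cast_of_lt (show r * a < d by omega)]
        exact Nat.mul_div_cancel_left a hr
      · intro h hh
        simp only [Finset.mem_filter, Finset.mem_univ, true_and] at hh
        have hdvd : r ∣ h.val := (dvd_val_iff d r h).mpr hh
        rw [← zpow_natCast (gw d ^ (m * (r : ℤ))) (h.val / r), ← _root_.zpow_mul]
        congr 1
        have h5 : (r : ℤ) * ((h.val / r : ℕ) : ℤ) = (h.val : ℤ) := by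
          exact_mod_cast Nat.mul_div_cancel' hdvd
        rw [mul_assoc, h5]
    have hinn : inn d (modT d k l g) (modT d k' l' g)
        = gw d ^ (m * l.val) * ((∑ a ∈ Finset.range s, (gw d ^ (m * (r : ℤ))) ^ a) * C) := by
      simp only [inn, hterm, hcase]
      rw [step1, ← Finset.mul_sum, step2]
    have habs1 : ‖gw d ^ (m * (l.val : ℤ))‖ = 1 := by
      rw [norm_zpow, gw_abs, one_zpow]
    by_cases hζ : gw d ^ (m * (r : ℤ)) = 1
    · rw [if_pos ⟨hcond.mp hζ, hcl⟩, hinn, norm_mul, habs1, one_mul, norm_mul, hζ]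
      simp only [_root_.one_pow, Finset.sum_const, Finset.card_range, nsmul_eq_mul,
        mul_one]
      rw [Complex.norm_natCast, hCdef, Complex.norm_real, Real.norm_eq_abs,
        _root_.abs_of_nonneg (by positivity)]
      have hd0 : (0:ℝ) < d := by
        have := NeZero.pos d; exact_mod_cast this
      have h9 : (r : ℝ) * s = d := by exact_mod_cast hrs
      field_simp
      linarith [h9]
    · rw [if_neg (fun hc => hζ (hcond.mpr hc.1)), hinn]
      rw [geom_sum_eq hζ s, hζs, sub_self, zero_div, zero_mul, mul_zero, norm_zero]
  · rw [if_neg (by tauto)]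
    have hzero : ∀ n : ZMod d, g (n - l) * g (n - l') = 0 := by
      intro n
      rw [hgdef (n - l), hgdef (n - l')]
      by_cases h1 : r ∣ (n - l).val
      · rw [if_pos h1]
        by_cases h2 : r ∣ (n - l').val
        · exfalso
          apply hcl
          have e1 := (dvd_val_iff d r (n - l)).mp h1
          have e2 := (dvd_val_iff d r (n - l')).mp h2
          rw [cast_val_sub d r hrd] at e1 e2
          exact (sub_eq_zero.mp e1).symm.trans (sub_eq_zero.mp e2)
        · rw [if_neg h2, mul_zero]
      · rw [if_neg h1, zero_mul]
    simp only [inn, hterm, hzero, mul_zero, Finset.sum_const_zero, map_zero, norm_zero]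

open ComplexOrder Matrix in
lemma rank_aux {m n : Type*} [Fintype m] [Fintype n] (A : Matrix m n ℂ) :
    (Aᴴ * A).rank = A.rank :=
  Matrix.rank_conjTranspose_mul_self A

/-- for a positive divisor `r` of `d`, the normalized indicator
vector `g` of `{n : r ∣ n}` has `rank G(g) = d`, and the Gabor system
`{M^k T^ℓ g}` is a 2-distance set. -/
theorem stmt9 (d : ℕ) [NeZero d] (hd : 1 ≤ d) (r : ℕ) (hr : 0 < r) (hrd : r ∣ d)
    (g : ZMod d → ℂ)
    (hgdef : ∀ n : ZMod d,
      g n = if r ∣ n.val then ((Real.sqrt ((r : ℝ) / d) : ℝ) : ℂ) else 0) :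
    (Gmat d g).rank = d ∧
    ∃ s t : ℝ, ∀ p q : ZMod d × ZMod d, p ≠ q →
      ‖inn d (modT d p.1 p.2 g) (modT d q.1 q.2 g)‖ = s ∨
      ‖inn d (modT d p.1 p.2 g) (modT d q.1 q.2 g)‖ = t := by
  haveI : NeZero r := ⟨hr.ne'⟩
  have hrs : r * (d / r) = d := Nat.mul_div_cancel' hrd
  have hs0 : d / r ≠ 0 := by
    intro h; rw [h, mul_zero] at hrs; exact (NeZero.ne d) hrs.symm
  haveI : NeZero (d / r) := ⟨hs0⟩
  classical
  constructor
  · -- rank computation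
    set Φ : ZMod d × ZMod d → ZMod (d / r) × ZMod r :=
      fun p => ((p.1.val : ZMod (d / r)), (p.2.val : ZMod r)) with hΦ
    set B : Matrix (ZMod (d / r) × ZMod r) (ZMod d × ZMod d) ℂ :=
      Matrix.of (fun i p => if Φ p = i then 1 else 0) with hB
    have hBapp : ∀ i p, B i p = if Φ p = i then 1 else 0 := fun i p => rfl
    have hpq : ∀ p q : ZMod d × ZMod d, Gmat d g p q =
        if Φ p = Φ q then 1 else 0 := by
      intro p q
      show ((‖inn d (modT d p.1 p.2 g) (modT d q.1 q.2 g)‖ ^ 2 : ℝ) : ℂ)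
        = if Φ p = Φ q then 1 else 0
      rw [key d r hr hrd g hgdef p.1 p.2 q.1 q.2]
      have hiff : (Φ p = Φ q) ↔
          ((p.1.val : ZMod (d / r)) = (q.1.val : ZMod (d / r)) ∧
            (p.2.val : ZMod r) = (q.2.val : ZMod r)) := by
        rw [hΦ, Prod.ext_iff]
      by_cases hc : ((p.1.val : ZMod (d / r)) = (q.1.val : ZMod (d / r)) ∧
          (p.2.val : ZMod r) = (q.2.val : ZMod r))
      · rw [if_pos hc, if_pos (hiff.mpr hc)]; norm_num
      · rw [if_neg hc, if_neg (fun h => hc (hiff.mp h))]; norm_num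
    have hGB : Gmat d g = B.conjTranspose * B := by
      ext p q
      rw [Matrix.mul_apply, hpq p q]
      rw [Finset.sum_eq_single (Φ p)]
      · rw [Matrix.conjTranspose_apply, hBapp, hBapp, if_pos rfl, star_one, one_mul]
        by_cases hc : Φ p = Φ q
        · rw [if_pos hc, if_pos hc.symm]
        · rw [if_neg hc, if_neg (fun h => hc h.symm)]
      · intro j _ hj
        rw [Matrix.conjTranspose_apply, hBapp, if_neg (fun h => hj h.symm), star_zero,
          zero_mul]
      · intro h; exact absurd (Finset.mem_univ _) h
    -- section of Φ
    set σ : ZMod (d / r) × ZMod r → ZMod d × ZMod d :=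
      fun i => (((i.1.val : ℕ) : ZMod d), ((i.2.val : ℕ) : ZMod d)) with hσdef
    have hσ : ∀ i, Φ (σ i) = i := by
      intro i
      have h1 : i.1.val < d := lt_of_lt_of_le (ZMod.val_lt i.1) (Nat.div_le_self d r)
      have h2 : i.2.val < d := lt_of_lt_of_le (ZMod.val_lt i.2)
        (Nat.le_of_dvd (NeZero.pos d) hrd)
      rw [hΦ, hσdef]
      simp only
      rw [ZMod.val_cast_of_lt h1, ZMod.val_cast_of_lt h2]
      exact Prod.ext (ZMod.natCast_rightInverse i.1) (ZMod.natCast_rightInverse i.2)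
    have hsurj : Function.Surjective B.mulVecLin := by
      intro v
      refine ⟨fun p => if p = σ (Φ p) then v (Φ p) else 0, ?_⟩
      funext i
      rw [Matrix.mulVecLin_apply, Matrix.mulVec, dotProduct]
      rw [Finset.sum_eq_single (σ i)]
      · rw [hBapp, hσ, if_pos rfl, one_mul, if_pos rfl]
      · intro p _ hp
        by_cases hc : Φ p = i
        · rw [hBapp, if_pos hc, one_mul, if_neg, ]
          intro he
          exact hp (by rw [he, hc])
        · rw [hBapp, if_neg hc, zero_mul]
      · intro h; exact absurd (Finset.mem_univ _) h
    have hrankB : B.rank = d := by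
      rw [Matrix.rank, LinearMap.range_eq_top.mpr hsurj, finrank_top,
        Module.finrank_fintype_fun_eq_card]
      rw [Fintype.card_prod, ZMod.card, ZMod.card, Nat.div_mul_cancel hrd]
    rw [hGB, rank_aux, hrankB]
  · refine ⟨0, 1, fun p q _ => ?_⟩
    rw [key d r hr hrd g hgdef p.1 p.2 q.1 q.2]
    split_ifs
    · right; rfl
    · left; rfl
end
end
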